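/- Let β_n = D'(C_n, -1), the derivative of the domination polynomial of C_n evaluated at -1. Then β_n = -n if n ≡ 0 (mod 4), β_n = n if n ≡ 1 (mod 4), and β_n = 0 if n ≡ 2 or 3 (mod 4). -/

import Mathlib

open Polynomial SimpleGraph

/-- `S` is a dominating set of `G`: every vertex is in `S` or adjacent to a vertex of `S`. -/
def IsDomSet {V : Type*} (G : SimpleGraph V) (S : Finset V) : Prop :=
  ∀ v : V, v ∈ S ∨ ∃ u ∈ S, G.Adj u v

/-- The domination polynomial `D(G,x) = ∑ d(G,i) xⁱ`. -/
noncomputable def domPoly {V : Type*} [Fintype V] (G : SimpleGraph V) : Polynomial ℤ :=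
  ∑ i ∈ Finset.range (Fintype.card V + 1),
    (Nat.card {S : Finset V // IsDomSet G S ∧ S.card = i} : ℤ) • (X : Polynomial ℤ) ^ i

namespace DomPolyAux

open Finset

noncomputable section
open scoped Classical

/-! ### The linear (string) side: signed counts of binary strings avoiding three
consecutive `false`s, with `k` leading `false`s already present and `true`-padding at the end. -/

/-- sign `(-1)^{#true}` as a product. -/
def sgn {m : ℕ} (f : Fin m → Bool) : ℤ := ∏ j, (if f j then (-1 : ℤ) else 1)

/-- padded string: `k` falses, then `f`, then trues forever. -/
def pad (k : ℕ) {m : ℕ} (f : Fin m → Bool) : ℕ → Prop :=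
  fun i => if i < k then False else if h : i - k < m then f ⟨i - k, h⟩ = true else True

/-- no three consecutive falses in the padded string. -/
def OKf (k : ℕ) {m : ℕ} (f : Fin m → Bool) : Prop :=
  ∀ i : ℕ, pad k f i ∨ pad k f (i + 1) ∨ pad k f (i + 2)

def Nsum (k m : ℕ) : ℤ := ∑ f : Fin m → Bool, if OKf k f then sgn f else 0

lemma sgn_cons {m : ℕ} (b : Bool) (f : Fin m → Bool) :
    sgn (Fin.cons b f) = (if b then (-1 : ℤ) else 1) * sgn f := by
  unfold sgn
  rw [Fin.prod_univ_succ]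
  cases b <;> simp

lemma pad_cons_false {k m : ℕ} (f : Fin m → Bool) (i : ℕ) :
    pad k (Fin.cons false f) i ↔ pad (k + 1) f i := by
  unfold pad
  rcases Nat.lt_trichotomy i k with h | rfl | h
  · simp [h, Nat.lt_succ_of_lt h]
  · simp [Nat.lt_irrefl, Nat.lt_succ_self, Nat.sub_self]
  · have h1 : ¬ i < k := by omega
    have h2 : ¬ i < k + 1 := by omega
    simp only [h1, h2, if_false]
    have hik : i - k = (i - (k + 1)) + 1 := by omega
    by_cases h3 : i - (k + 1) < m
    · have h4 : i - k < m + 1 := by omega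
      rw [dif_pos h3, dif_pos h4]
      have : (⟨i - k, h4⟩ : Fin (m + 1)) = Fin.succ ⟨i - (k + 1), h3⟩ := by
        simp [Fin.ext_iff]; omega
      rw [this, Fin.cons_succ]
    · have h4 : ¬ i - k < m + 1 := by omega
      rw [dif_neg h3, dif_neg h4]

lemma OKf_cons_false {k m : ℕ} (f : Fin m → Bool) :
    OKf k (Fin.cons false f) ↔ OKf (k + 1) f := by
  unfold OKf
  simp only [pad_cons_false]

lemma not_OKf_cons_false_two {m : ℕ} (f : Fin m → Bool) :
    ¬ OKf 2 (Fin.cons false f) := by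
  intro h
  have := h 0
  rw [pad_cons_false, pad_cons_false, pad_cons_false] at this
  unfold pad at this
  simp at this

lemma pad_cons_true_eq {k m : ℕ} (f : Fin m → Bool) :
    pad k (Fin.cons true f) k := by simp [pad]

lemma pad_cons_true_gt {k m : ℕ} (f : Fin m → Bool) (j : ℕ) :
    pad k (Fin.cons true f) (k + 1 + j) ↔ pad 0 f j := by
  unfold pad
  have h1 : ¬ k + 1 + j < k := by omega
  have h2 : k + 1 + j - k = j + 1 := by omega
  simp only [h1, if_false, h2, Nat.not_lt_zero, Nat.sub_zero]
  by_cases h3 : j < m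
  · have h4 : j + 1 < m + 1 := by omega
    rw [dif_pos h4, dif_pos h3]
    have : (⟨j + 1, h4⟩ : Fin (m + 1)) = Fin.succ ⟨j, h3⟩ := by simp [Fin.ext_iff]
    rw [this, Fin.cons_succ]
  · have h4 : ¬ j + 1 < m + 1 := by omega
    rw [dif_neg h4, dif_neg h3]

lemma OKf_cons_true {k m : ℕ} (hk : k ≤ 2) (f : Fin m → Bool) :
    OKf k (Fin.cons true f) ↔ OKf 0 f := by
  constructor
  · intro h j
    have := h (k + 1 + j)
    rwa [show k + 1 + j + 1 = k + 1 + (j + 1) by ring, show k + 1 + j + 2 = k + 1 + (j + 2) by ring,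
      pad_cons_true_gt, pad_cons_true_gt, pad_cons_true_gt] at this
  · intro h i
    by_cases hik : i ≤ k ∧ k ≤ i + 2
    · -- the window contains position `k`, which is `true`
      obtain ⟨h1, h2⟩ := hik
      have hi2 : i ≤ 2 := by omega
      interval_cases k <;> interval_cases i <;>
        first
        | exact Or.inl (pad_cons_true_eq f)
        | exact Or.inr (Or.inl (pad_cons_true_eq f))
        | exact Or.inr (Or.inr (pad_cons_true_eq f))
    · have hi : k + 1 ≤ i := by omega
      obtain ⟨j, rfl⟩ : ∃ j, i = k + 1 + j := ⟨i - (k + 1), by omega⟩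
      have := h j
      rw [← pad_cons_true_gt (k := k) f j, ← pad_cons_true_gt (k := k) f (j + 1),
        ← pad_cons_true_gt (k := k) f (j + 2)] at this
      rwa [show k + 1 + (j + 1) = k + 1 + j + 1 by ring,
        show k + 1 + (j + 2) = k + 1 + j + 2 by ring] at this

lemma Nsum_zero (k : ℕ) (hk : k ≤ 2) : Nsum k 0 = 1 := by
  rw [Nsum]
  haveI : Subsingleton (Fin 0 → Bool) := ⟨fun a b => funext fun i => i.elim0⟩
  rw [Fintype.sum_subsingleton _ (fun _ : Fin 0 => true)]
  have hok : OKf k (fun i : Fin 0 => true) := by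
    intro i
    right; right
    simp only [pad]
    have : ¬ i + 2 < k := by omega
    simp [this]
  rw [if_pos hok]
  simp [sgn]

lemma sum_cons_split {m : ℕ} (F : (Fin (m + 1) → Bool) → ℤ) :
    ∑ g : Fin (m + 1) → Bool, F g =
      (∑ f : Fin m → Bool, F (Fin.cons true f)) + ∑ f : Fin m → Bool, F (Fin.cons false f) := by
  rw [← (Fin.consEquiv (fun _ : Fin (m + 1) => Bool)).sum_comp F]
  rw [Fintype.sum_prod_type]
  simp [Fintype.sum_bool, Fin.consEquiv]

lemma Nsum_succ (k m : ℕ) (hk : k ≤ 2) :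
    Nsum k (m + 1) = -Nsum 0 m + (if k < 2 then Nsum (k + 1) m else 0) := by
  rw [Nsum, sum_cons_split]
  congr 1
  · rw [Nsum, neg_eq_neg_one_mul, Finset.mul_sum]
    refine Finset.sum_congr rfl fun f _ => ?_
    rw [OKf_cons_true hk, sgn_cons]
    split <;> simp
  · by_cases h2 : k < 2
    · rw [if_pos h2, Nsum]
      refine Finset.sum_congr rfl fun f _ => ?_
      rw [OKf_cons_false, sgn_cons]
      split <;> simp
    · rw [if_neg h2]
      have hk2 : k = 2 := by omega
      subst hk2
      refine Finset.sum_eq_zero fun f _ => ?_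
      rw [if_neg (not_OKf_cons_false_two f)]

def t0 (m : ℕ) : ℤ := if m % 4 = 0 then 1 else if m % 4 = 3 then -1 else 0
def t1 (m : ℕ) : ℤ := if m % 4 = 0 then 1 else if m % 4 = 2 then -1 else 0
def t2 (m : ℕ) : ℤ := if m % 4 = 0 then 1 else if m % 4 = 1 then -1 else 0

lemma Nsum_closed (m : ℕ) : Nsum 0 m = t0 m ∧ Nsum 1 m = t1 m ∧ Nsum 2 m = t2 m := by
  induction m with
  | zero =>
    refine ⟨Nsum_zero 0 (by norm_num), Nsum_zero 1 (by norm_num), Nsum_zero 2 (by norm_num)⟩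
  | succ m ih =>
    obtain ⟨h0, h1, h2⟩ := ih
    rw [Nsum_succ 0 m (by norm_num), Nsum_succ 1 m (by norm_num), Nsum_succ 2 m (by norm_num),
      h0, h1, h2]
    have h4 : m % 4 = 0 ∨ m % 4 = 1 ∨ m % 4 = 2 ∨ m % 4 = 3 := by omega
    unfold t0 t1 t2
    rcases h4 with h | h | h | h <;>
      · have h' : (m + 1) % 4 = (m % 4 + 1) % 4 := by omega
        rw [h'] at *
        simp [h]

/-! ### The polynomial side -/

lemma natpow_id (c : ℕ) : (c : ℤ) * (-1) ^ (c - 1) = -((c : ℤ) * (-1) ^ c) := by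
  cases c with
  | zero => simp
  | succ c =>
    rw [Nat.succ_sub_one, pow_succ]
    push_cast
    ring

lemma eval_deriv_domPoly {V : Type*} [Fintype V] (G : SimpleGraph V) :
    (derivative (domPoly G)).eval (-1) =
      -∑ S ∈ univ.filter (fun S => IsDomSet G S), ((S.card : ℤ) * (-1) ^ S.card) := by
  have hcard : ∀ i, (Nat.card {S : Finset V // IsDomSet G S ∧ S.card = i} : ℤ) =
      ((univ.filter (fun S => IsDomSet G S ∧ S.card = i)).card : ℤ) := by
    intro i
    rw [Nat.card_eq_fintype_card, Fintype.card_subtype]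
  rw [domPoly, map_sum, eval_finset_sum]
  have : ∀ i ∈ Finset.range (Fintype.card V + 1),
      (derivative ((Nat.card {S : Finset V // IsDomSet G S ∧ S.card = i} : ℤ) • (X : Polynomial ℤ) ^ i)).eval (-1)
        = ∑ S ∈ (univ.filter (fun S => IsDomSet G S)).filter (fun S => S.card = i),
            -((S.card : ℤ) * (-1) ^ S.card) := by
    intro i _
    rw [derivative_smul, derivative_X_pow, zsmul_eq_mul, eval_mul, eval_mul, eval_C, eval_pow,
      eval_X, eval_intCast, hcard, Finset.filter_filter]
    have h2 : ∑ S ∈ univ.filter (fun S => IsDomSet G S ∧ S.card = i),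
        -((S.card : ℤ) * (-1) ^ S.card)
        = ∑ _S ∈ univ.filter (fun S => IsDomSet G S ∧ S.card = i),
            -((i : ℤ) * (-1) ^ i) :=
      Finset.sum_congr rfl (fun S hS => by
        simp only [Finset.mem_filter] at hS
        rw [hS.2.2])
    rw [h2, Finset.sum_const, natpow_id, nsmul_eq_mul]
    push_cast
    ring
  rw [Finset.sum_congr rfl this]
  rw [Finset.sum_fiberwise_of_maps_to (g := fun S : Finset V => S.card)
    (fun S _ => Finset.mem_range.2 (Nat.lt_succ_of_le (Finset.card_le_univ S)))]
  rw [← Finset.sum_neg_distrib]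

/-! ### The cyclic side -/

/-- The explicit domination predicate for the cycle. -/
def Pd (m : ℕ) (S : Finset (Fin (m + 1))) : Prop :=
  ∀ v : Fin (m + 1), v ∈ S ∨ v + 1 ∈ S ∨ v - 1 ∈ S

lemma isDomSet_cycle_iff {m : ℕ} (S : Finset (Fin (m + 1))) :
    IsDomSet (cycleGraph (m + 1)) S ↔ Pd m S := by
  cases m with
  | zero =>
    constructor
    · intro h v
      rcases h v with h | ⟨u, _, hadj⟩
      · exact Or.inl h
      · exact absurd hadj cycleGraph_one_adj
    · intro h v
      rcases h v with h | h | h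
      · exact Or.inl h
      · have he : v + 1 = v := Fin.ext (by omega)
        exact Or.inl (he ▸ h)
      · have he : v - 1 = v := Fin.ext (by omega)
        exact Or.inl (he ▸ h)
  | succ m =>
    unfold IsDomSet Pd
    refine forall_congr' fun v => or_congr_right ?_
    constructor
    · rintro ⟨u, hu, hadj⟩
      rw [cycleGraph_adj] at hadj
      rcases hadj with h | h
      · left
        rwa [show v + 1 = u by rw [← h]; abel]
      · right
        rwa [show v - 1 = u by rw [← h]; abel]
    · rintro (h | h)
      · exact ⟨v + 1, h, by rw [cycleGraph_adj]; left; abel⟩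
      · exact ⟨v - 1, h, by rw [cycleGraph_adj]; right; abel⟩

lemma val_add_one {m : ℕ} (v : Fin (m + 1)) : (v + 1).val = (v.val + 1) % (m + 1) := by
  simp [Fin.add_def, Fin.val_one']

lemma val_sub_one {m : ℕ} (v : Fin (m + 1)) : (v - 1).val = (v.val + m) % (m + 1) := by
  rw [Fin.sub_def]
  simp only [Fin.val_one']
  cases m with
  | zero => simp [Nat.mod_one]
  | succ m' =>
    rw [Nat.one_mod_eq_one.2 (by omega)]
    congr 1
    omega

/-! ### Cutting the cycle at `0` -/

lemma pad_zero_lt {m : ℕ} (S : Finset (Fin (m + 1))) {i : ℕ} (h : i < m) :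
    pad 0 (fun j : Fin m => decide (Fin.succ j ∈ S)) i ↔ (⟨i + 1, by omega⟩ : Fin (m + 1)) ∈ S := by
  unfold pad
  simp only [Nat.not_lt_zero, if_false, Nat.sub_zero, dif_pos h, decide_eq_true_eq]
  have : Fin.succ (⟨i, h⟩ : Fin m) = (⟨i + 1, by omega⟩ : Fin (m + 1)) := rfl
  rw [this]

lemma pad_zero_ge {m : ℕ} (f : Fin m → Bool) {i : ℕ} (h : m ≤ i) : pad 0 f i := by
  unfold pad
  have h1 : ¬ i - 0 < m := by omega
  rw [if_neg (by omega : ¬ i < 0), dif_neg h1]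
  trivial

lemma cut {m : ℕ} (S : Finset (Fin (m + 1))) (h0 : (0 : Fin (m + 1)) ∈ S) :
    Pd m S ↔ OKf 0 (fun j : Fin m => decide (Fin.succ j ∈ S)) := by
  constructor
  · intro hP i
    by_cases him : m ≤ i
    · exact Or.inl (pad_zero_ge _ him)
    by_cases him1 : m ≤ i + 1
    · exact Or.inr (Or.inl (pad_zero_ge _ him1))
    by_cases him2 : m ≤ i + 2
    · exact Or.inr (Or.inr (pad_zero_ge _ him2))
    push_neg at him him1 him2
    have hv1 : (⟨i + 2, by omega⟩ : Fin (m + 1)) + 1 = (⟨i + 3, by omega⟩ : Fin (m + 1)) := by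
      apply Fin.ext
      rw [val_add_one]
      show (i + 2 + 1) % (m + 1) = i + 3
      rw [Nat.mod_eq_of_lt (by omega)]
    have hv2 : (⟨i + 2, by omega⟩ : Fin (m + 1)) - 1 = (⟨i + 1, by omega⟩ : Fin (m + 1)) := by
      apply Fin.ext
      rw [val_sub_one]
      show (i + 2 + m) % (m + 1) = i + 1
      rw [show i + 2 + m = (i + 1) + (m + 1) by ring, Nat.add_mod_right,
        Nat.mod_eq_of_lt (by omega)]
    rcases hP ⟨i + 2, by omega⟩ with h | h | h
    · refine Or.inr (Or.inl ?_)
      rw [pad_zero_lt S (by omega : i + 1 < m)]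
      exact h
    · refine Or.inr (Or.inr ?_)
      rw [pad_zero_lt S (by omega : i + 2 < m)]
      rwa [hv1] at h
    · refine Or.inl ?_
      rw [pad_zero_lt S him]
      rwa [hv2] at h
  · intro hOK v
    by_cases hv0 : v = 0
    · exact Or.inl (hv0 ▸ h0)
    have ht0 : 1 ≤ v.val := by
      rcases Nat.eq_zero_or_pos v.val with h | h
      · exact absurd (Fin.ext h) hv0
      · exact h
    have htm : v.val < m + 1 := v.isLt
    by_cases hv1 : v.val = 1
    · refine Or.inr (Or.inr ?_)
      have : v - 1 = 0 := by
        apply Fin.ext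
        rw [val_sub_one, hv1, Nat.add_comm, Nat.mod_self]
        rfl
      rw [this]; exact h0
    by_cases hvm : v.val = m
    · refine Or.inr (Or.inl ?_)
      have : v + 1 = 0 := by
        apply Fin.ext
        rw [val_add_one, hvm, Nat.mod_self]
        rfl
      rw [this]; exact h0
    -- now 2 ≤ v.val ≤ m - 1
    have h2 : 2 ≤ v.val := by omega
    have hm1 : v.val + 1 ≤ m := by omega
    have e0 : v = (⟨v.val, htm⟩ : Fin (m + 1)) := Fin.ext rfl
    have e1 : v - 1 = (⟨v.val - 1, by omega⟩ : Fin (m + 1)) := by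
      apply Fin.ext
      rw [val_sub_one, show v.val + m = (v.val - 1) + (m + 1) by omega, Nat.add_mod_right,
        Nat.mod_eq_of_lt (by omega)]
    have e2 : v + 1 = (⟨v.val + 1, by omega⟩ : Fin (m + 1)) := by
      apply Fin.ext
      rw [val_add_one, Nat.mod_eq_of_lt (by omega)]
    rcases hOK (v.val - 2) with h | h | h
    · rw [pad_zero_lt S (by omega : v.val - 2 < m)] at h
      refine Or.inr (Or.inr ?_)
      rw [e1]
      have heq : (⟨v.val - 2 + 1, by omega⟩ : Fin (m + 1)) = (⟨v.val - 1, by omega⟩ : Fin (m + 1)) := by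
        simp only [Fin.mk.injEq]
        omega
      rwa [heq] at h
    · rw [show v.val - 2 + 1 = v.val - 1 by omega,
        pad_zero_lt S (by omega : v.val - 1 < m)] at h
      refine Or.inl ?_
      rw [e0]
      have heq : (⟨v.val - 1 + 1, by omega⟩ : Fin (m + 1)) = (⟨v.val, htm⟩ : Fin (m + 1)) := by
        simp only [Fin.mk.injEq]
        omega
      rwa [heq] at h
    · rw [show v.val - 2 + 2 = v.val by omega, pad_zero_lt S (by omega : v.val < m)] at h
      refine Or.inr (Or.inl ?_)
      rw [e2]
      exact h

/-! ### Summation lemmas -/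

lemma swap_sum {m : ℕ} :
    ∑ S ∈ univ.filter (fun S => Pd m S), ((S.card : ℤ) * (-1) ^ S.card)
      = ∑ v : Fin (m + 1),
          ∑ S ∈ (univ.filter (fun S => Pd m S)).filter (fun S => v ∈ S), (-1 : ℤ) ^ S.card := by
  have h1 : ∀ v : Fin (m + 1),
      ∑ S ∈ (univ.filter (fun S => Pd m S)).filter (fun S => v ∈ S), (-1 : ℤ) ^ S.card
        = ∑ S ∈ univ.filter (fun S => Pd m S), if v ∈ S then (-1 : ℤ) ^ S.card else 0 :=
    fun v => Finset.sum_filter _ _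
  rw [Finset.sum_congr rfl (fun v _ => h1 v), Finset.sum_comm]
  refine Finset.sum_congr rfl fun S _ => ?_
  rw [Finset.sum_ite_mem, Finset.univ_inter, Finset.sum_const, nsmul_eq_mul]

lemma translate {m : ℕ} (v : Fin (m + 1)) :
    ∑ S ∈ (univ.filter (fun S => Pd m S)).filter (fun S => v ∈ S), (-1 : ℤ) ^ S.card
      = ∑ S ∈ (univ.filter (fun S => Pd m S)).filter (fun S => (0 : Fin (m + 1)) ∈ S),
          (-1 : ℤ) ^ S.card := by
  have hmem_sub : ∀ (S : Finset (Fin (m + 1))) (x : Fin (m + 1)),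
      x ∈ S.map (Equiv.subRight v).toEmbedding ↔ x + v ∈ S := by
    intro S x
    rw [Finset.mem_map_equiv]
    simp
  have hmem_add : ∀ (S : Finset (Fin (m + 1))) (x : Fin (m + 1)),
      x ∈ S.map (Equiv.addRight v).toEmbedding ↔ x - v ∈ S := by
    intro S x
    rw [Finset.mem_map_equiv]
    simp [sub_eq_add_neg]
  have hPd_sub : ∀ S : Finset (Fin (m + 1)), Pd m S → Pd m (S.map (Equiv.subRight v).toEmbedding) := by
    intro S h w
    rw [hmem_sub, hmem_sub, hmem_sub]
    have := h (w + v)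
    rwa [show w + v + 1 = w + 1 + v by abel, show w + v - 1 = w - 1 + v by abel] at this
  have hPd_add : ∀ S : Finset (Fin (m + 1)), Pd m S → Pd m (S.map (Equiv.addRight v).toEmbedding) := by
    intro S h w
    rw [hmem_add, hmem_add, hmem_add]
    have := h (w - v)
    rwa [show w - v + 1 = w + 1 - v by abel, show w - v - 1 = w - 1 - v by abel] at this
  refine Finset.sum_nbij' (fun S => S.map (Equiv.subRight v).toEmbedding)
    (fun S => S.map (Equiv.addRight v).toEmbedding) ?_ ?_ ?_ ?_ ?_
  · intro S hS
    simp only [Finset.mem_filter] at hS ⊢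
    refine ⟨⟨Finset.mem_univ _, hPd_sub S hS.1.2⟩, ?_⟩
    rw [hmem_sub, zero_add]
    exact hS.2
  · intro S hS
    simp only [Finset.mem_filter] at hS ⊢
    refine ⟨⟨Finset.mem_univ _, hPd_add S hS.1.2⟩, ?_⟩
    rw [hmem_add, show v - v = 0 by abel]
    exact hS.2
  · intro S _
    ext x
    rw [hmem_add, hmem_sub, sub_add_cancel]
  · intro S _
    ext x
    rw [hmem_sub, hmem_add, add_sub_cancel_right]
  · intro S _
    rw [Finset.card_map]

lemma sgn_eq {m : ℕ} (f : Fin m → Bool) :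
    sgn f = (-1 : ℤ) ^ (univ.filter (fun j => f j = true)).card := by
  rw [sgn, Finset.prod_ite, Finset.prod_const, Finset.prod_const, one_pow, mul_one]

lemma zero_sum {m : ℕ} :
    ∑ S ∈ (univ.filter (fun S => Pd m S)).filter (fun S => (0 : Fin (m + 1)) ∈ S),
        (-1 : ℤ) ^ S.card = -Nsum 0 m := by
  have res_ins : ∀ (f : Fin m → Bool) (j : Fin m),
      decide (Fin.succ j ∈ insert (0 : Fin (m + 1))
        ((univ.filter (fun j => f j = true)).map ⟨Fin.succ, Fin.succ_injective m⟩)) = f j := by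
    intro f j
    have hiff : (Fin.succ j ∈ insert (0 : Fin (m + 1))
        ((univ.filter (fun j => f j = true)).map ⟨Fin.succ, Fin.succ_injective m⟩)) ↔ f j = true := by
      simp only [Finset.mem_insert, Finset.mem_map, Finset.mem_filter, Finset.mem_univ,
        true_and, Function.Embedding.coeFn_mk]
      constructor
      · rintro (h | ⟨a, ha, hsa⟩)
        · exact absurd h (Fin.succ_ne_zero j)
        · rwa [Fin.succ_injective m hsa] at ha
      · intro h
        exact Or.inr ⟨j, h, rfl⟩
    cases hj : f j with
    | true => simp [hiff, hj]
    | false => simp [hiff, hj]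
  have zero_notmem : ∀ f : Fin m → Bool, (0 : Fin (m + 1)) ∉
      ((univ.filter (fun j => f j = true)).map ⟨Fin.succ, Fin.succ_injective m⟩) := by
    intro f h
    simp only [Finset.mem_map, Function.Embedding.coeFn_mk] at h
    obtain ⟨a, _, ha⟩ := h
    exact Fin.succ_ne_zero a ha
  rw [Nsum, ← Finset.sum_filter, ← Finset.sum_neg_distrib]
  refine Finset.sum_nbij' (fun S => fun j : Fin m => decide (Fin.succ j ∈ S))
    (fun f => insert 0 ((univ.filter (fun j => f j = true)).map ⟨Fin.succ, Fin.succ_injective m⟩))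
    ?_ ?_ ?_ ?_ ?_
  · intro S hS
    simp only [Finset.mem_filter] at hS ⊢
    exact ⟨Finset.mem_univ _, (cut S hS.2).1 hS.1.2⟩
  · intro f hf
    simp only [Finset.mem_filter] at hf ⊢
    have h0 : (0 : Fin (m + 1)) ∈ insert (0 : Fin (m + 1))
        ((univ.filter (fun j => f j = true)).map ⟨Fin.succ, Fin.succ_injective m⟩) :=
      Finset.mem_insert_self _ _
    refine ⟨⟨Finset.mem_univ _, ?_⟩, h0⟩
    refine (cut _ h0).2 ?_
    have : (fun j : Fin m => decide (Fin.succ j ∈ insert (0 : Fin (m + 1))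
        ((univ.filter (fun j => f j = true)).map ⟨Fin.succ, Fin.succ_injective m⟩))) = f :=
      funext (res_ins f)
    rw [this]
    exact hf.2
  · intro S hS
    simp only [Finset.mem_filter] at hS
    ext x
    induction x using Fin.cases with
    | zero => simp [hS.2]
    | succ j =>
      simp only [Finset.mem_insert, Finset.mem_map, Finset.mem_filter, Finset.mem_univ,
        true_and, Function.Embedding.coeFn_mk, decide_eq_true_eq]
      constructor
      · rintro (h | ⟨a, ha, hsa⟩)
        · exact absurd h (Fin.succ_ne_zero j)
        · rwa [Fin.succ_injective m hsa] at ha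
      · intro h
        exact Or.inr ⟨j, h, rfl⟩
  · intro f _
    exact funext (res_ins f)
  · intro S hS
    simp only [Finset.mem_filter] at hS
    have hSeq : S = insert 0 ((univ.filter (fun j =>
        (fun j : Fin m => decide (Fin.succ j ∈ S)) j = true)).map
          ⟨Fin.succ, Fin.succ_injective m⟩) := by
      ext x
      induction x using Fin.cases with
      | zero => simp [hS.2]
      | succ j =>
        simp only [Finset.mem_insert, Finset.mem_map, Finset.mem_filter, Finset.mem_univ,
          true_and, Function.Embedding.coeFn_mk, decide_eq_true_eq]
        constructor
        · intro h
          exact Or.inr ⟨j, h, rfl⟩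
        · rintro (h | ⟨a, ha, hsa⟩)
          · exact absurd h (Fin.succ_ne_zero j)
          · rwa [Fin.succ_injective m hsa] at ha
    rw [sgn_eq]
    conv_lhs => rw [hSeq]
    rw [Finset.card_insert_of_notMem (zero_notmem _), Finset.card_map, pow_succ]
    ring

end

end DomPolyAux

theorem domPoly_cycle_derivative_eval_neg_one (n : ℕ) (hn : 1 ≤ n) :
    (derivative (domPoly (cycleGraph n))).eval (-1) =
      if n % 4 = 0 then -(n : ℤ) else if n % 4 = 1 then (n : ℤ) else 0 := by
  classical
  obtain ⟨m, rfl⟩ : ∃ m, n = m + 1 := ⟨n - 1, by omega⟩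
  rw [DomPolyAux.eval_deriv_domPoly]
  have hfilter : (Finset.univ.filter (fun S => IsDomSet (cycleGraph (m + 1)) S))
      = Finset.univ.filter (fun S => DomPolyAux.Pd m S) :=
    Finset.filter_congr (fun S _ => by rw [DomPolyAux.isDomSet_cycle_iff])
  rw [hfilter, DomPolyAux.swap_sum,
    Finset.sum_congr rfl (fun v _ => DomPolyAux.translate v)]
  rw [DomPolyAux.zero_sum, Finset.sum_const, Finset.card_univ, Fintype.card_fin]
  obtain ⟨hN, -, -⟩ := DomPolyAux.Nsum_closed m
  rw [hN]
  unfold DomPolyAux.t0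
  have hm4 : m % 4 = 0 ∨ m % 4 = 1 ∨ m % 4 = 2 ∨ m % 4 = 3 := by omega
  rcases hm4 with h | h | h | h <;>
    rw [h] <;>
    rw [show (m + 1) % 4 = (m % 4 + 1) % 4 by omega, h] <;>
    norm_num <;>
    push_cast <;>
    ring
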